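/- The orbit of the point z = (z_1, ..., z_{2q}) in the torus T^{2q} = R^{2q}/Z^{2q} under the abelian semigroup \Omega generated by the maps w \mapsto p_i \cdot w mod Z^{2q} (for 1 \leq i \leq q) is not dense in T^{2q}. -/

import Mathlib

lemma chainE_le {E : ℕ → ℕ} (hE : ∀ k, E k + 1 ≤ E (k+1)) (a k : ℕ) :
    E a + k ≤ E (a + k) := by
  induction k with
  | zero => simp
  | succ n ih =>
    have h1 := hE (a + n)
    have h2 : a + (n+1) = (a+n)+1 := by omega
    rw [h2]
    omega

lemma core (P : ℕ) (hP : 2 ≤ P) (E : ℕ → ℕ) (hE : ∀ k, E k + 1 ≤ E (k+1))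
    (m k0 : ℕ) (hdiv : ∀ k < k0, P ^ E k ∣ m)
    (hsmall : (m : ℝ) * ((P:ℝ) ^ E k0)⁻¹ < 1/4) :
    ∃ (K : ℕ) (r : ℝ), 0 ≤ r ∧ r < 1/2 ∧
      (m:ℝ) * ∑' k : ℕ, ((P:ℝ) ^ E k)⁻¹ = K + r := by
  have hP1 : (1:ℝ) < P := by exact_mod_cast hP.trans_lt' one_lt_two
  have hP0 : (0:ℝ) < P := by linarith
  have hx0 : (0:ℝ) ≤ (P:ℝ)⁻¹ := by positivity
  have hx1 : (P:ℝ)⁻¹ < 1 := by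
    rw [inv_lt_one_iff₀]; right; exact hP1
  set f : ℕ → ℝ := fun k => ((P:ℝ) ^ E k)⁻¹ with hf
  have hfle : ∀ a k, f (a + k) ≤ (P:ℝ)⁻¹ ^ (E a + k) := by
    intro a k
    rw [inv_pow]
    apply inv_anti₀ (by positivity)
    calc (P:ℝ) ^ (E a + k) ≤ (P:ℝ) ^ E (a + k) :=
          pow_le_pow_right₀ hP1.le (chainE_le hE a k)
      _ = _ := rfl
  have hgsum : ∀ a : ℕ, Summable (fun k : ℕ => (P:ℝ)⁻¹ ^ (E a + k)) := by
    intro a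
    simpa [pow_add] using (summable_geometric_of_lt_one hx0 hx1).mul_left ((P:ℝ)⁻¹ ^ E a)
  have hgval : ∀ a : ℕ, ∑' k : ℕ, (P:ℝ)⁻¹ ^ (E a + k) ≤ 2 * ((P:ℝ) ^ E a)⁻¹ := by
    intro a
    have : ∑' k : ℕ, (P:ℝ)⁻¹ ^ (E a + k) = (P:ℝ)⁻¹ ^ E a * (1 - (P:ℝ)⁻¹)⁻¹ := by
      simp only [pow_add]
      rw [tsum_mul_left, tsum_geometric_of_lt_one hx0 hx1]
    rw [this, inv_pow]
    have h2 : (1 - (P:ℝ)⁻¹)⁻¹ ≤ 2 := by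
      rw [inv_le_comm₀ (by rw [sub_pos]; linarith) (by norm_num)]
      have : (P:ℝ)⁻¹ ≤ 2⁻¹ := by
        apply inv_anti₀ (by norm_num)
        exact_mod_cast hP
      linarith
    calc ((P:ℝ) ^ E a)⁻¹ * (1 - (P:ℝ)⁻¹)⁻¹ ≤ ((P:ℝ) ^ E a)⁻¹ * 2 := by
          apply mul_le_mul_of_nonneg_left h2 (by positivity)
      _ = 2 * ((P:ℝ) ^ E a)⁻¹ := by ring
  have hfpos : ∀ k, 0 ≤ f k := fun k => by positivity
  have hsum : Summable f := by
    apply Summable.of_nonneg_of_le hfpos _ (hgsum 0)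
    intro k
    simpa using hfle 0 k
  have hsplit := (hsum.sum_add_tsum_nat_add k0).symm
  refine ⟨∑ i ∈ Finset.range k0, m / P ^ E i, (m:ℝ) * ∑' k : ℕ, f (k + k0), ?_, ?_, ?_⟩
  · have : 0 ≤ ∑' k : ℕ, f (k + k0) := tsum_nonneg (fun k => hfpos _)
    positivity
  · have htail : ∑' k : ℕ, f (k + k0) ≤ 2 * ((P:ℝ) ^ E k0)⁻¹ := by
      refine le_trans (Summable.tsum_le_tsum ?_ ((summable_nat_add_iff k0).2 hsum) (hgsum k0)) (hgval k0)
      intro k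
      simpa [add_comm] using hfle k0 k
    have h1 : (m:ℝ) * ∑' k : ℕ, f (k + k0) ≤ (m:ℝ) * (2 * ((P:ℝ) ^ E k0)⁻¹) :=
      mul_le_mul_of_nonneg_left htail (by positivity)
    have h2 : (m:ℝ) * (2 * ((P:ℝ) ^ E k0)⁻¹) = 2 * ((m:ℝ) * ((P:ℝ) ^ E k0)⁻¹) := by ring
    linarith
  · rw [hsplit, mul_add]
    congr 1
    rw [Finset.mul_sum, Nat.cast_sum]
    apply Finset.sum_congr rfl
    intro i hi
    have hd := hdiv i (Finset.mem_range.mp hi)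
    rw [Nat.cast_div hd (by positivity)]
    rw [div_eq_mul_inv]
    push_cast
    ring

lemma small4 (P : ℕ) (hP : 2 ≤ P) (m e : ℕ) (x : ℝ) (hm : (m:ℝ) ≤ (P:ℝ) ^ x)
    (hx : x + 3 ≤ (e:ℝ)) : (m:ℝ) * ((P:ℝ) ^ e)⁻¹ < 1/4 := by
  have hP1 : (1:ℝ) < P := by exact_mod_cast hP.trans_lt' one_lt_two
  have hP0 : (0:ℝ) < P := by linarith
  have h1 : (P:ℝ) ^ x ≤ (P:ℝ) ^ ((e:ℝ) - 3) :=
    Real.rpow_le_rpow_of_exponent_le hP1.le (by linarith)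
  have h2 : (P:ℝ) ^ ((e:ℝ) - 3) = (P:ℝ) ^ (e:ℕ) / (P:ℝ) ^ 3 := by
    rw [Real.rpow_sub hP0, Real.rpow_natCast]
    norm_num [Real.rpow_natCast]
  have hpe : (0:ℝ) < (P:ℝ) ^ (e:ℕ) := by positivity
  have h3 : (m:ℝ) ≤ (P:ℝ) ^ (e:ℕ) / (P:ℝ) ^ 3 := by
    rw [← h2]; exact hm.trans h1
  have h4 : (m:ℝ) * ((P:ℝ) ^ e)⁻¹ ≤ ((P:ℝ) ^ 3)⁻¹ := by
    have ha : (m:ℝ) * ((P:ℝ) ^ e)⁻¹ ≤ ((P:ℝ) ^ (e:ℕ) / (P:ℝ) ^ 3) * ((P:ℝ) ^ e)⁻¹ :=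
      mul_le_mul_of_nonneg_right h3 (by positivity)
    have hb : ((P:ℝ) ^ (e:ℕ) / (P:ℝ) ^ 3) * ((P:ℝ) ^ e)⁻¹ = ((P:ℝ) ^ 3)⁻¹ := by
      field_simp
    rw [hb] at ha
    exact ha
  have h5 : ((P:ℝ) ^ 3)⁻¹ ≤ ((2:ℝ) ^ 3)⁻¹ := by
    apply inv_anti₀ (by norm_num)
    gcongr
    exact_mod_cast hP
  norm_num at h5
  linarith

lemma perpoint (q : ℕ) (hq : 2 ≤ q) (p : Fin q → ℕ) (hp1 : ∀ i, 1 < p i)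
    (hmono : StrictMono p) (N : ℕ)
    (hN : (q : ℝ) * Real.log (p ⟨q - 1, Nat.sub_lt (lt_of_lt_of_le Nat.zero_lt_two hq) Nat.one_pos⟩) / Real.log (p ⟨0, lt_of_lt_of_le Nat.zero_lt_two hq⟩) < (N : ℝ))
    (zA zB : Fin q → ℝ)
    (hzA : ∀ i, zA i = ∑' k : ℕ, ((p i : ℝ) ^ (N ^ (2 * (k + 1))))⁻¹)
    (hzB : ∀ i, zB i = ∑' k : ℕ, ((p i : ℝ) ^ (N ^ (2 * (k + 1) + 1)))⁻¹)
    (n : Fin q → ℕ) :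
    ∃ (j : Fin q ⊕ Fin q) (K : ℕ) (r : ℝ), 0 ≤ r ∧ r < 1/2 ∧
      ((∏ i, p i ^ n i : ℕ) : ℝ) * Sum.elim zA zB j = K + r := by
  have hqpos : 0 < q := by omega
  set p0 : ℕ := p ⟨0, by omega⟩ with hp0def
  set pq : ℕ := p ⟨q - 1, by omega⟩ with hpqdef
  set c : ℝ := (q : ℝ) * Real.log pq / Real.log p0 with hcdef
  have hp2 : ∀ i, 2 ≤ p i := fun i => hp1 i
  have hple : ∀ i, p i ≤ pq := by
    intro i
    exact hmono.monotone (by rw [Fin.le_def]; simp; omega)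
  have hp0le : ∀ i, p0 ≤ p i := by
    intro i
    exact hmono.monotone (by rw [Fin.le_def]; simp)
  have hlog0 : 0 < Real.log p0 := Real.log_pos (by exact_mod_cast hp1 _)
  have hlogle : ∀ i, Real.log p0 ≤ Real.log (p i) := by
    intro i
    apply Real.log_le_log (show (0:ℝ) < (p0:ℕ) by exact_mod_cast Nat.zero_lt_of_lt (hp1 ⟨0, by omega⟩))
    exact_mod_cast hp0le i
  have hlogq : ∀ i, Real.log (p i) ≤ Real.log pq := by
    intro i
    apply Real.log_le_log (by exact_mod_cast (hp1 i).trans_le (le_refl _) |>.le.trans_lt' one_pos)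
    exact_mod_cast hple i
  have hc2 : (2:ℝ) ≤ c := by
    have h1 : (1:ℝ) ≤ Real.log pq / Real.log p0 := by
      rw [le_div_iff₀ hlog0]
      simpa using (hlogle ⟨q-1, by omega⟩)
    have hq2 : (2:ℝ) ≤ (q:ℝ) := by exact_mod_cast hq
    calc (2:ℝ) ≤ (q:ℝ) * 1 := by linarith
      _ ≤ (q:ℝ) * (Real.log pq / Real.log p0) := by
          apply mul_le_mul_of_nonneg_left h1 (by positivity)
      _ = c := by rw [hcdef]; ring
  have hNc : c < (N:ℝ) := hN
  have hN3 : 3 ≤ N := by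
    have : (2:ℝ) < (N:ℝ) := lt_of_le_of_lt hc2 hNc
    exact_mod_cast (by exact_mod_cast this : 2 < N)
  -- pick the index with maximal exponent
  obtain ⟨i, hi⟩ : ∃ i : Fin q, ∀ j, n j ≤ n i := by
    obtain ⟨i, -, hi⟩ := Finset.exists_max_image Finset.univ n ⟨⟨0, by omega⟩, Finset.mem_univ _⟩
    exact ⟨i, fun j => hi j (Finset.mem_univ j)⟩
  set m : ℕ := ∏ j, p j ^ n j with hmdef
  have hdvd_i : p i ^ n i ∣ m := Finset.dvd_prod_of_mem _ (Finset.mem_univ i)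
  -- bound on m
  have hmnat : m ≤ pq ^ (n i * q) := by
    calc m ≤ ∏ _j : Fin q, pq ^ n i := by
          apply Finset.prod_le_prod'
          intro j _
          calc p j ^ n j ≤ pq ^ n j := Nat.pow_le_pow_left (hple j) _
            _ ≤ pq ^ n i := Nat.pow_le_pow_right (by have := hp2 j; have := hple j; omega) (hi j)
      _ = pq ^ (n i * q) := by
          rw [Finset.prod_const, Finset.card_univ, Fintype.card_fin, ← pow_mul]
  have hmbound : (m : ℝ) ≤ (p i : ℝ) ^ (c * n i) := by
    have h1 : (m : ℝ) ≤ ((pq : ℝ)) ^ (n i * q : ℕ) := by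
      exact_mod_cast hmnat
    have h2 : ((pq : ℝ)) ^ (n i * q : ℕ) = (pq : ℝ) ^ (((n i * q : ℕ)) : ℝ) := by
      rw [Real.rpow_natCast]
    have hpq0 : (0:ℝ) < pq := by have := hp2 ⟨q-1, by omega⟩; positivity
    have hpi0 : (0:ℝ) < p i := by have := hp2 i; positivity
    have key : (((n i * q : ℕ)) : ℝ) * Real.log pq ≤ (c * n i) * Real.log (p i) := by
      push_cast
      rw [hcdef]
      rw [div_mul_eq_mul_div, div_mul_eq_mul_div, le_div_iff₀ hlog0]
      have hlq0 : 0 ≤ Real.log pq := by linarith [hlogle ⟨q-1, by omega⟩, hlog0.le]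
      have hd := hlogle i
      have hni0 : (0:ℝ) ≤ (n i : ℝ) := by positivity
      have hq0 : (0:ℝ) ≤ (q : ℝ) := by positivity
      nlinarith [mul_nonneg (mul_nonneg hq0 hlq0) hni0]
    calc (m : ℝ) ≤ (pq : ℝ) ^ (((n i * q : ℕ)) : ℝ) := by rw [← h2]; exact h1
      _ = Real.exp ((((n i * q : ℕ)) : ℝ) * Real.log pq) := by
          rw [Real.rpow_def_of_pos hpq0, mul_comm]
      _ ≤ Real.exp ((c * n i) * Real.log (p i)) := Real.exp_le_exp.mpr key
      _ = (p i : ℝ) ^ (c * n i) := by rw [Real.rpow_def_of_pos hpi0, mul_comm]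
  by_cases h0 : n i = 0
  · -- m = 1
    have hm1 : m = 1 := by
      apply Finset.prod_eq_one
      intro j _
      have : n j = 0 := by have := hi j; omega
      simp [this]
    refine ⟨Sum.inl i, ?_⟩
    have := core (p i) (hp2 i) (fun k => N ^ (2 * (k + 1))) ?_ m 0 (by omega) ?_
    · obtain ⟨K, r, h1, h2, h3⟩ := this
      exact ⟨K, r, h1, h2, by rw [Sum.elim_inl, hzA i]; exact h3⟩
    · intro k
      show N ^ (2 * (k + 1)) + 1 ≤ N ^ (2 * (k + 1 + 1))
      have := Nat.pow_lt_pow_right (show 1 < N by omega) (show 2*(k+1) < 2*(k+1+1) by omega)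
      omega
    · show (m:ℝ) * ((p i : ℝ) ^ (N ^ (2 * (0 + 1))))⁻¹ < 1/4
      rw [hm1]
      apply small4 (p i) (hp2 i) 1 _ 0
      · simp [Real.rpow_zero]
      · have : 9 ≤ N ^ (2 * (0 + 1)) := by
          calc 9 = 3 ^ 2 := by norm_num
            _ ≤ N ^ 2 := Nat.pow_le_pow_left hN3 2
            _ = N ^ (2 * (0+1)) := by norm_num
        have : (9:ℝ) ≤ ((N ^ (2 * (0 + 1)) : ℕ) : ℝ) := by exact_mod_cast this
        linarith
  · -- n i ≥ 1
    have hM1 : 1 ≤ n i := by omega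
    have hex : ∃ s, n i < N ^ s := ⟨n i, Nat.lt_pow_self (n := n i) (show 1 < N by omega)⟩
    set s : ℕ := Nat.find hex with hsdef
    have hs : n i < N ^ s := Nat.find_spec hex
    have hs1 : 1 ≤ s := by
      rcases Nat.eq_zero_or_pos s with h | h
      · rw [h] at hs; simp at hs; omega
      · exact h
    have hs2 : N ^ (s - 1) ≤ n i := by
      have := Nat.find_min hex (show s - 1 < s by omega)
      omega
    -- the size bound common to both parities
    have hsmall_exp : c * n i + 3 ≤ ((N ^ (s+1) : ℕ) : ℝ) := by
      have hMr : ((n i : ℕ) : ℝ) ≤ (N:ℝ) ^ s - 1 := by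
        have : ((n i : ℕ) : ℝ) + 1 ≤ ((N ^ s : ℕ) : ℝ) := by exact_mod_cast hs
        push_cast at this ⊢
        linarith
      have hNr : (3:ℝ) ≤ (N:ℝ) := by exact_mod_cast hN3
      have hpow1 : (1:ℝ) ≤ (N:ℝ) ^ s := one_le_pow₀ (by linarith)
      have hcM : c * n i ≤ (N:ℝ) * ((N:ℝ) ^ s - 1) := by
        have h1 : c * n i ≤ c * ((N:ℝ) ^ s - 1) :=
          mul_le_mul_of_nonneg_left hMr (by linarith)
        have h2 : c * ((N:ℝ) ^ s - 1) ≤ (N:ℝ) * ((N:ℝ) ^ s - 1) :=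
          mul_le_mul_of_nonneg_right (le_of_lt hNc) (by linarith)
        linarith
      have hps : ((N ^ (s+1) : ℕ) : ℝ) = (N:ℝ) ^ s * (N:ℝ) := by
        push_cast
        rw [pow_succ]
      rw [hps]
      nlinarith
    have hdvdM : ∀ e : ℕ, e ≤ n i → p i ^ e ∣ m :=
      fun e he => (pow_dvd_pow (p i) he).trans hdvd_i
    rcases Nat.even_or_odd s with ⟨a, ha⟩ | ⟨a, ha⟩
    · -- s even, s = a + a ≥ 2 : use the B (odd) chain
      have ha1 : 1 ≤ a := by omega
      refine ⟨Sum.inr i, ?_⟩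
      have := core (p i) (hp2 i) (fun k => N ^ (2 * (k + 1) + 1)) ?_ m (a - 1) ?_ ?_
      · obtain ⟨K, r, h1, h2, h3⟩ := this
        exact ⟨K, r, h1, h2, by rw [Sum.elim_inr, hzB i]; exact h3⟩
      · intro k
        show N ^ (2 * (k + 1) + 1) + 1 ≤ N ^ (2 * (k + 1 + 1) + 1)
        have := Nat.pow_lt_pow_right (show 1 < N by omega)
          (show 2*(k+1)+1 < 2*(k+1+1)+1 by omega)
        omega
      · intro k hk
        apply hdvdM
        calc N ^ (2 * (k + 1) + 1) ≤ N ^ (s - 1) :=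
              Nat.pow_le_pow_right (by omega) (by omega)
          _ ≤ n i := hs2
      · have he : 2 * (a - 1 + 1) + 1 = s + 1 := by omega
        show (m:ℝ) * ((p i : ℝ) ^ (N ^ (2 * (a - 1 + 1) + 1)))⁻¹ < 1/4
        rw [he]
        exact small4 (p i) (hp2 i) m _ (c * n i) hmbound hsmall_exp
    · -- s odd, s = 2a+1 : use the A (even) chain
      refine ⟨Sum.inl i, ?_⟩
      have := core (p i) (hp2 i) (fun k => N ^ (2 * (k + 1))) ?_ m a ?_ ?_
      · obtain ⟨K, r, h1, h2, h3⟩ := this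
        exact ⟨K, r, h1, h2, by rw [Sum.elim_inl, hzA i]; exact h3⟩
      · intro k
        show N ^ (2 * (k + 1)) + 1 ≤ N ^ (2 * (k + 1 + 1))
        have := Nat.pow_lt_pow_right (show 1 < N by omega)
          (show 2*(k+1) < 2*(k+1+1) by omega)
        omega
      · intro k hk
        apply hdvdM
        calc N ^ (2 * (k + 1)) ≤ N ^ (s - 1) :=
              Nat.pow_le_pow_right (by omega) (by omega)
          _ ≤ n i := hs2
      · have he : 2 * (a + 1) = s + 1 := by omega
        show (m:ℝ) * ((p i : ℝ) ^ (N ^ (2 * (a + 1))))⁻¹ < 1/4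
        rw [he]
        exact small4 (p i) (hp2 i) m _ (c * n i) hmbound hsmall_exp

lemma smul_coe_circ (x : ℝ) (m : ℕ) :
    (m • (x : AddCircle (1:ℝ))) = ((m * x : ℝ) : AddCircle (1:ℝ)) := by
  rw [← AddCircle.coe_nsmul]
  norm_num

lemma coe_nat_add_circ (K : ℕ) (r : ℝ) :
    ((K + r : ℝ) : AddCircle (1:ℝ)) = (r : AddCircle (1:ℝ)) := by
  rw [AddCircle.coe_add]
  simp only [add_eq_right]
  rw [AddCircle.coe_eq_zero_iff]
  exact ⟨K, by simp⟩

lemma eq_int_circ (v r : ℝ) (h : (v : AddCircle (1:ℝ)) = (r : AddCircle (1:ℝ))) :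
    ∃ k : ℤ, v - r = k := by
  rw [QuotientAddGroup.eq_iff_sub_mem] at h
  obtain ⟨k, hk⟩ := h
  exact ⟨k, by simpa using hk.symm⟩

/-- The orbit of `z = (z 1, ..., z (2q))` in the torus `T^{2q}` under the
semigroup of endomorphisms `w ↦ p_1^{n_1} ⋯ p_q^{n_q} • w` is not dense. -/
theorem stmt2 (q : ℕ) (hq : 2 ≤ q) (p : Fin q → ℕ) (hp1 : ∀ i, 1 < p i)
    (hmono : StrictMono p) (N : ℕ)
    (hN : (q : ℝ) * Real.log (p ⟨q - 1, by omega⟩) / Real.log (p ⟨0, by omega⟩) < (N : ℝ))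
    (zA zB : Fin q → ℝ)
    (hzA : ∀ i, zA i = ∑' k : ℕ, ((p i : ℝ) ^ (N ^ (2 * (k + 1))))⁻¹)
    (hzB : ∀ i, zB i = ∑' k : ℕ, ((p i : ℝ) ^ (N ^ (2 * (k + 1) + 1)))⁻¹)
    (z : (Fin q ⊕ Fin q) → AddCircle (1 : ℝ))
    (hz : ∀ j : Fin q ⊕ Fin q,
      z j = ((Sum.elim zA zB j : ℝ) : AddCircle (1 : ℝ))) :
    ¬ Dense {w : (Fin q ⊕ Fin q) → AddCircle (1 : ℝ) |
        ∃ n : Fin q → ℕ, w = fun j => (∏ i, p i ^ n i) • z j} := by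
  intro hd
  set V : Set (AddCircle (1:ℝ)) :=
    (fun x : ℝ => (x : AddCircle (1:ℝ))) '' Set.Ioo (3/5 : ℝ) (9/10 : ℝ) with hV
  have hVopen : IsOpen V := QuotientAddGroup.isOpenMap_coe _ isOpen_Ioo
  set U : Set ((Fin q ⊕ Fin q) → AddCircle (1:ℝ)) := {w | ∀ j, w j ∈ V} with hU
  have hUopen : IsOpen U := by
    have hUeq : U = Set.pi Set.univ (fun _ => V) := by
      ext w
      simp [Set.mem_pi, hU]
    rw [hUeq]
    exact isOpen_set_pi Set.finite_univ (fun _ _ => hVopen)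
  have hUne : U.Nonempty :=
    ⟨fun _ => ((7/10 : ℝ) : AddCircle (1:ℝ)),
      fun j => ⟨7/10, ⟨by norm_num, by norm_num⟩, rfl⟩⟩
  obtain ⟨w, hwS, hwU⟩ := hd.exists_mem_open hUopen hUne
  obtain ⟨n, rfl⟩ := hwS
  obtain ⟨j, K, r, hr0, hr2, hreq⟩ := perpoint q hq p hp1 hmono N hN zA zB hzA hzB n
  have hwj := hwU j
  simp only [hU, Set.mem_setOf_eq] at hwj
  have hcompute : (∏ i, p i ^ n i) • z j = ((r : ℝ) : AddCircle (1:ℝ)) := by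
    rw [hz j, smul_coe_circ]
    have : ((∏ i, p i ^ n i : ℕ) : ℝ) * Sum.elim zA zB j = (K : ℝ) + r := hreq
    rw [this, coe_nat_add_circ]
  rw [hcompute] at hwj
  obtain ⟨v, ⟨hv1, hv2⟩, hveq⟩ := hwj
  obtain ⟨k, hk⟩ := eq_int_circ v r hveq
  have hk1 : (0:ℝ) < (k:ℤ) := by
    rw [← hk]; linarith
  have hk2 : ((k:ℤ):ℝ) < 1 := by
    rw [← hk]; linarith
  have : (0:ℤ) < k := by exact_mod_cast hk1
  have : (1:ℤ) ≤ k := this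
  have : (1:ℝ) ≤ ((k:ℤ):ℝ) := by exact_mod_cast this
  linarith
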